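/- (Distribution- and hypothesis-specific critical sample size for symmetric learners.) Let a group G act on a set X, let ρ be a G-invariant probability measure on X, let A be a G-equivariant learner, and let h : X → {0,1} be a hypothesis. Let p = inf over g ∈ G with g·h ≠ h of P(h(X) ≠ (g·h)(X)) where X ~ ρ, and assume p > 0 and that there exists g ∈ G with g·h ≠ h. Then for any natural number n with n ≤ 1/(2p), when X_1,…,X_n are drawn i.i.d. from ρ and D_h = ((X_1,h(X_1)),…,(X_n,h(X_n))), the probability that A(D_h) ≠ h is at least 1/4. -/

import Mathlib

open MeasureTheory ENNReal

/-- Distribution- and hypothesis-specific critical sample size for symmetric learners: if `A` is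
a `G`-equivariant learner, `ρ` is `G`-invariant, `h` is a hypothesis moved by some `g ∈ G`
(where `(g·h)(x) = h(g⁻¹·x)`), and `p > 0` is the infimum over such `g` of the `ρ`-probability
that `h` and `g·h` disagree, then for any sample size `n ≤ 1/(2p)`, the learner `A` fails to
identify `h` with probability at least `1/4`. -/
theorem symmetric_learner_critical_sample_size
    {G X : Type*} [Group G] [MulAction G X] [MeasurableSpace X]
    (hmeas : ∀ g : G, Measurable fun x : X => g • x)
    (ρ : Measure X) [IsProbabilityMeasure ρ]
    (hinv : ∀ g : G, Measure.map (fun x : X => g • x) ρ = ρ)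
    (n : ℕ) (A : (Fin n → X × Bool) → (X → Bool))
    (hequiv : ∀ (g : G) (D : Fin n → X × Bool),
      A (fun i => (g • (D i).1, (D i).2)) = fun x => A D (g⁻¹ • x))
    (h : X → Bool)
    (hmoved : ∃ g : G, (fun x => h (g⁻¹ • x)) ≠ h)
    (p : ℝ≥0∞)
    (hp : p = ⨅ (g : G) (_ : (fun x => h (g⁻¹ • x)) ≠ h), ρ {x | h x ≠ h (g⁻¹ • x)})
    (hp0 : 0 < p)
    (hn : (n : ℝ≥0∞) ≤ 1 / (2 * p)) :
    (Measure.pi fun _ : Fin n => ρ) {ω | A (fun i => (ω i, h (ω i))) ≠ h} ≥ 1 / 4 := by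
  classical
  set μ : Measure (Fin n → X) := Measure.pi fun _ : Fin n => ρ with hμ
  have : IsProbabilityMeasure μ := by rw [hμ]; infer_instance
  set F : Set (Fin n → X) := {ω | A (fun i => (ω i, h (ω i))) ≠ h} with hF
  -- p is finite
  obtain ⟨g₀, hg₀⟩ := hmoved
  have hp_le : p ≤ ρ {x | h x ≠ h (g₀⁻¹ • x)} := hp ▸ iInf₂_le g₀ hg₀
  have hp1 : p ≤ 1 := hp_le.trans (prob_le_one)
  have hptop : p ≠ ⊤ := (hp1.trans_lt (by norm_num)).ne
  -- n * p ≤ 1/2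
  have hnp : (n : ℝ≥0∞) * p ≤ 1 / 2 := by
    have h2p : (2 : ℝ≥0∞) * p ≠ 0 := mul_ne_zero (by norm_num) hp0.ne'
    have h2pt : (2 : ℝ≥0∞) * p ≠ ⊤ := ENNReal.mul_ne_top (by norm_num) hptop
    have : (n : ℝ≥0∞) * (2 * p) ≤ (1 / (2 * p)) * (2 * p) :=
      mul_le_mul_left hn _
    rw [one_div, ENNReal.inv_mul_cancel h2p h2pt] at this
    calc (n : ℝ≥0∞) * p ≤ (n * (2 * p)) / 2 := by
          rw [ENNReal.le_div_iff_mul_le (by norm_num) (by norm_num)]; ring_nf; rfl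
      _ ≤ 1 / 2 := ENNReal.div_le_div_right this 2
  -- main estimate for each ε > 0
  refine ENNReal.le_of_forall_pos_le_add fun ε hε hFtop => ?_
  -- choose g with disagreement measure < p + n-scaled epsilon
  set ε' : ℝ≥0∞ := (ε : ℝ≥0∞) / n with hε'
  have hpε : p < p + ε' := by
    refine ENNReal.lt_add_right hptop ?_
    simp only [hε', ne_eq, ENNReal.div_eq_zero_iff]
    push_neg
    exact ⟨by exact_mod_cast hε.ne', natCast_ne_top n⟩
  have hiInf : (⨅ (g : G) (_ : (fun x => h (g⁻¹ • x)) ≠ h), ρ {x | h x ≠ h (g⁻¹ • x)})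
      < p + ε' := hp ▸ hpε
  obtain ⟨g, hgi⟩ := iInf_lt_iff.mp hiInf
  obtain ⟨hg, hgq⟩ := iInf_lt_iff.mp hgi
  have hnq : (n : ℝ≥0∞) * ρ {x | h x ≠ h (g⁻¹ • x)} ≤ 1 / 2 + ε := by
    calc (n : ℝ≥0∞) * ρ {x | h x ≠ h (g⁻¹ • x)} ≤ n * (p + ε') :=
          mul_le_mul_right hgq.le _
      _ = n * p + n * ε' := mul_add _ _ _
      _ ≤ 1 / 2 + ε := by
          refine add_le_add hnp ?_
          rcases Nat.eq_zero_or_pos n with hn0 | hn0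
          · simp [hn0]
          · rw [hε', ENNReal.mul_div_cancel (by exact_mod_cast hn0.ne') (natCast_ne_top n)]
  -- measurable equiv given by the action of g on samples
  let e : X ≃ᵐ X :=
    { toEquiv := MulAction.toPerm g
      measurable_toFun := hmeas g
      measurable_invFun := hmeas g⁻¹ }
  let E : (Fin n → X) ≃ᵐ (Fin n → X) := MeasurableEquiv.piCongrRight fun _ => e
  have hEapp : ∀ ω : Fin n → X, E ω = fun i => g • ω i := fun _ => rfl
  -- E is measure preserving
  have hEmp : μ.map E = μ := by
    rw [hμ]
    refine (Measure.pi_eq fun s hs => ?_).symm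
    rw [MeasurableEquiv.map_apply]
    have hpre : E ⁻¹' Set.pi Set.univ s = Set.pi Set.univ fun i => (g • ·) ⁻¹' s i := by
      ext ω; simp [hEapp, Set.mem_pi]
    rw [hpre, Measure.pi_pi]
    refine Finset.prod_congr rfl fun i _ => ?_
    rw [← Measure.map_apply (hmeas g) (hs i), hinv g]
  -- failure set for the hypothesis g·h
  set F' : Set (Fin n → X) :=
    {ω | A (fun i => (ω i, h (g⁻¹ • ω i))) ≠ fun x => h (g⁻¹ • x)} with hF'
  have hpre : E ⁻¹' F' = F := by
    ext ω
    have hD : (fun i => (g • ω i, h (g⁻¹ • g • ω i))) =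
        fun i => (g • (ω i, h (ω i)).1, (ω i, h (ω i)).2) := by
      funext i; simp [inv_smul_smul]
    simp only [Set.mem_preimage, hF', Set.mem_setOf_eq, hEapp, hF]
    rw [hD, hequiv g fun i => (ω i, h (ω i))]
    constructor
    · intro hne heq; exact hne (by rw [heq])
    · intro hne heq
      refine hne (funext fun x => ?_)
      have := congrFun heq (g • x)
      simpa [inv_smul_smul] using this
  have hFF' : μ F' = μ F := by
    rw [← hpre, ← MeasurableEquiv.map_apply E, hEmp]
  -- the bad event: some sample distinguishes h and g·h
  set Bad : Set (Fin n → X) := ⋃ i : Fin n, (fun ω => ω i) ⁻¹' {x | h x ≠ h (g⁻¹ • x)}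
    with hBad
  have hBadle : μ Bad ≤ 1 / 2 + ε := by
    obtain ⟨t, hsub, htm, hteq⟩ := exists_measurable_superset ρ {x | h x ≠ h (g⁻¹ • x)}
    have hterm : ∀ i : Fin n, μ ((fun ω => ω i) ⁻¹' {x | h x ≠ h (g⁻¹ • x)})
        ≤ ρ {x | h x ≠ h (g⁻¹ • x)} := by
      intro i
      refine le_trans (measure_mono (Set.preimage_mono hsub)) ?_
      rw [← hteq]
      have : (fun ω : Fin n → X => ω i) ⁻¹' t =
          Set.pi Set.univ (Function.update (fun _ : Fin n => Set.univ) i t) :=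
        Set.eval_preimage
      rw [hμ, this, Measure.pi_pi]
      calc ∏ j, ρ (Function.update (fun _ : Fin n => Set.univ) i t j)
          = ρ (Function.update (fun _ : Fin n => Set.univ) i t i) *
            ∏ j ∈ Finset.univ.erase i, ρ (Function.update (fun _ : Fin n => Set.univ) i t j) :=
            (Finset.mul_prod_erase _ _ (Finset.mem_univ i)).symm
        _ ≤ ρ (Function.update (fun _ : Fin n => Set.univ) i t i) * 1 :=
            mul_le_mul_right (Finset.prod_le_one (fun _ _ => zero_le)
              (fun j _ => prob_le_one)) _
        _ = ρ t := by simp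
    calc μ Bad ≤ ∑' i : Fin n, μ ((fun ω => ω i) ⁻¹' {x | h x ≠ h (g⁻¹ • x)}) :=
          measure_iUnion_le _
      _ ≤ ∑' _ : Fin n, ρ {x | h x ≠ h (g⁻¹ • x)} := ENNReal.tsum_le_tsum hterm
      _ = (n : ℝ≥0∞) * ρ {x | h x ≠ h (g⁻¹ • x)} := by
          rw [tsum_fintype]; simp [Finset.card_univ, mul_comm]
      _ ≤ 1 / 2 + ε := hnq
  -- outside Bad, failing on one dataset implies membership in F ∪ F'
  have hcover : Badᶜ ⊆ F ∪ F' := by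
    intro ω hω
    simp only [hBad, Set.compl_iUnion, Set.mem_iInter, Set.mem_compl_iff,
      Set.mem_preimage, Set.mem_setOf_eq, not_not] at hω
    by_cases hFω : ω ∈ F
    · exact Or.inl hFω
    · refine Or.inr ?_
      simp only [hF, Set.mem_setOf_eq, not_not] at hFω
      have hDeq : (fun i => (ω i, h (g⁻¹ • ω i))) = fun i => (ω i, h (ω i)) := by
        funext i; rw [← hω i]
      simp only [hF', Set.mem_setOf_eq, hDeq, hFω]
      exact fun heq => hg heq.symm
  -- combine: 1 ≤ μ F + μ F' + μ Bad
  have hone : (1 : ℝ≥0∞) ≤ 2 * μ F + (1 / 2 + ε) := by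
    have h1 : (1 : ℝ≥0∞) = μ Set.univ := (measure_univ).symm
    have h2 : μ Set.univ ≤ μ (F ∪ F') + μ Bad := by
      rw [← Set.union_compl_self Bad, Set.union_comm]
      exact (measure_union_le _ _).trans (add_le_add_left (measure_mono hcover) _)
    calc (1 : ℝ≥0∞) = μ Set.univ := h1
      _ ≤ μ (F ∪ F') + μ Bad := h2
      _ ≤ (μ F + μ F') + (1 / 2 + ε) :=
          add_le_add (measure_union_le _ _) hBadle
      _ = 2 * μ F + (1 / 2 + ε) := by rw [hFF']; ring
  -- conclude 1/4 ≤ μ F + ε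
  by_contra hcon
  push_neg at hcon
  have h2 : 2 * μ F + 2 * ε < 1 / 2 := by
    have := ENNReal.mul_lt_mul_iff_right (a := 2) (by norm_num) (by norm_num) |>.mpr hcon
    calc 2 * μ F + 2 * ε = 2 * (μ F + ε) := by ring
      _ < 2 * (1 / 4) := this
      _ = 1 / 2 := by
          rw [one_div, one_div, show (4:ℝ≥0∞) = 2*2 by norm_num,
            ENNReal.mul_inv (by norm_num) (by norm_num), ← mul_assoc,
            ENNReal.mul_inv_cancel (by norm_num) (by norm_num), one_mul]
  have h3 : 2 * μ F + (1 / 2 + ε) < 1 := by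
    calc 2 * μ F + (1 / 2 + ε) ≤ (2 * μ F + 2 * ε) + 1 / 2 := by
          rw [add_comm (1/2 : ℝ≥0∞) (ε : ℝ≥0∞), ← add_assoc]
          refine add_le_add_left (add_le_add_right ?_ _) _
          exact le_mul_of_one_le_left zero_le (by norm_num)
      _ < 1 / 2 + 1 / 2 := ENNReal.add_lt_add_right (by norm_num) h2
      _ = 1 := by rw [one_div]; exact ENNReal.inv_two_add_inv_two
  exact absurd hone (not_le.mpr h3)
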